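/- Every GWNC ring is a weakly clean ring. -/
import Mathlib


def IsWeaklyNilCleanElem {R : Type*} [Ring R] (a : R) : Prop :=
  ∃ e q : R, IsIdempotentElem e ∧ IsNilpotent q ∧ (a = q + e ∨ a = q - e)

/-- A ring is GWNC if every non-unit is weakly nil-clean. -/
def IsGWNCRing (R : Type*) [Ring R] : Prop :=
  ∀ a : R, ¬IsUnit a → IsWeaklyNilCleanElem a

def IsWeaklyCleanElem {R : Type*} [Ring R] (a : R) : Prop :=
  ∃ e : R, IsIdempotentElem e ∧ (IsUnit (a - e) ∨ IsUnit (a + e))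

theorem isWeaklyClean_of_isGWNC {R : Type*} [Ring R] (h : IsGWNCRing R) :
    ∀ a : R, IsWeaklyCleanElem a := by
  intro a
  by_cases ha : IsUnit a
  · exact ⟨0, IsIdempotentElem.zero, Or.inl (by simpa using ha)⟩
  · obtain ⟨e, q, he, hq, hcase | hcase⟩ := h a ha
    · refine ⟨1 - e, he.one_sub, Or.inr ?_⟩
      have : a + (1 - e) = 1 + q := by rw [hcase]; abel
      rw [this]
      exact hq.isUnit_one_add
    · refine ⟨1 - e, he.one_sub, Or.inl ?_⟩
      have : a - (1 - e) = q - 1 := by rw [hcase]; abel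
      rw [this]
      exact hq.isUnit_sub_one
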